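/- Let g : [0, ∞) → {1, 2, 3, …} be right-continuous and nondecreasing with g(u) → ∞ as u → ∞, let g⁻¹(n) = inf{u ≥ 0 : g(u) ≥ n}, and let D be the positive-integer-valued random variable with P(D ≥ n) = 1 − exp(−1/g⁻¹(n)). Suppose lim_{n→∞} n·P(D ≥ n) = c with 0 < c < ∞, that 0 < liminf_{n→∞} n²·P(D = n) ≤ limsup_{n→∞} n²·P(D = n) < ∞, and that Σ_{n=1}^∞ |c/n − P(D ≥ n)| < ∞. Then ∫_1^∞ |g(y) − c·y| / y² dy < ∞. -/

import Mathlib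

open Filter MeasureTheory
open scoped ENNReal

/-- `g⁻¹(n) = inf {u ≥ 0 : g(u) ≥ n}`. -/
noncomputable def ginv (g : ℝ → ℕ) (n : ℕ) : ℝ := sInf {u : ℝ | 0 ≤ u ∧ n ≤ g u}

/-- `P(D ≥ n)` for `D = g(1/X)`, `X` a rate-1 exponential:
`P(D ≥ n) = 1 − exp(−1/g⁻¹(n))` (equal to `1` when `g⁻¹(n) = 0`). -/
noncomputable def tailP (g : ℝ → ℕ) (n : ℕ) : ℝ :=
  if ginv g n = 0 then 1 else 1 - Real.exp (-1 / ginv g n)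

/-- `P(D = n) = P(D ≥ n) − P(D ≥ n+1)`. -/
noncomputable def pmfP (g : ℝ → ℕ) (n : ℕ) : ℝ := tailP g n - tailP g (n + 1)

lemma ginv_nonneg (g : ℝ → ℕ) (n : ℕ) : 0 ≤ ginv g n :=
  Real.sInf_nonneg fun _ hx => hx.1

lemma ginv_le_iff {g : ℝ → ℕ} (hmono : MonotoneOn g (Set.Ici 0))
    (hrc : ∀ x, 0 ≤ x → ContinuousWithinAt g (Set.Ici x) x)
    (hinf : Tendsto g atTop atTop) (n : ℕ) {u : ℝ} (hu : 0 ≤ u) :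
    ginv g n ≤ u ↔ n ≤ g u := by
  set S := {u : ℝ | 0 ≤ u ∧ n ≤ g u} with hS
  have hne : S.Nonempty := by
    obtain ⟨x, hx⟩ := (hinf.eventually (eventually_ge_atTop n)).exists_forall_of_atTop
    exact ⟨max x 0, le_max_right _ _, hx _ (le_max_left _ _)⟩
  have hbdd : BddBelow S := ⟨0, fun x hx => hx.1⟩
  have ht0 : 0 ≤ sInf S := Real.sInf_nonneg fun _ hx => hx.1
  constructor
  · intro h
    -- show n ≤ g (sInf S) first
    have hkey : n ≤ g (sInf S) := by
      have hev : ∀ᶠ v in nhdsWithin (sInf S) (Set.Ici (sInf S)), g v = g (sInf S) :=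
        (hrc (sInf S) ht0) ((isOpen_discrete {g (sInf S)}).mem_nhds rfl)
      obtain ⟨ε, hε, hball⟩ := Metric.mem_nhdsWithin_iff.1 hev
      obtain ⟨s, hsS, hs⟩ := Real.lt_sInf_add_pos hne hε
      have hts : sInf S ≤ s := csInf_le hbdd hsS
      have : g s = g (sInf S) := by
        refine hball ⟨?_, hts⟩
        rw [Metric.mem_ball, Real.dist_eq, abs_of_nonneg (by linarith)]
        linarith
      exact this ▸ hsS.2
    exact hkey.trans (hmono ht0 hu h)
  · intro h
    exact csInf_le hbdd ⟨hu, h⟩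

/-- indicator of `[a, ∞)`. -/
noncomputable def indi (a y : ℝ) : ℝ := if a ≤ y then 1 else 0

lemma indi_nonneg (a y : ℝ) : 0 ≤ indi a y := by unfold indi; split_ifs <;> norm_num

lemma measurable_indi (a : ℝ) : Measurable (indi a) := by
  unfold indi
  exact Measurable.ite measurableSet_Ici measurable_const measurable_const

lemma indi_mono (a : ℝ) : Monotone (indi a) := by
  intro y z hyz
  unfold indi
  split_ifs with h1 h2 <;> try norm_num
  exact absurd (h1.trans hyz) h2

lemma abs_indi_sub (a b y : ℝ) :
    |indi a y - indi b y| = if a ⊓ b ≤ y ∧ y < a ⊔ b then 1 else 0 := by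
  rcases le_total a b with h | h
  · rw [inf_eq_left.mpr h, sup_eq_right.mpr h]
    unfold indi
    split_ifs <;> simp_all <;> linarith
  · rw [inf_eq_right.mpr h, sup_eq_left.mpr h]
    unfold indi
    split_ifs <;> simp_all <;> linarith

lemma tsum_ite_lt (m : ℕ) : ∑' k : ℕ, (if k < m then (1 : ℝ) else 0) = m := by
  rw [tsum_eq_sum (s := Finset.range m) (by intro k hk; rw [Finset.mem_range] at hk; simp [hk])]
  rw [Finset.sum_congr rfl fun k hk => if_pos (Finset.mem_range.1 hk)]
  simp

lemma lintegral_Ico_inv_sq {s t : ℝ} (hs : 1 ≤ s) (hst : s ≤ t) :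
    ∫⁻ y in Set.Ico s t, ENNReal.ofReal ((y ^ 2)⁻¹) ≤ ENNReal.ofReal (s⁻¹ - t⁻¹) := by
  rw [Measure.restrict_congr_set Ico_ae_eq_Ioc]
  have hcont : ContinuousOn (fun y : ℝ => (y ^ 2)⁻¹) (Set.Icc s t) := by
    apply ContinuousOn.inv₀ ((continuous_pow 2).continuousOn)
    intro x hx
    have : (0:ℝ) < x := lt_of_lt_of_le one_pos (hs.trans hx.1)
    positivity
  have hint : IntegrableOn (fun y : ℝ => (y ^ 2)⁻¹) (Set.Ioc s t) :=
    (hcont.integrableOn_compact isCompact_Icc).mono_set Set.Ioc_subset_Icc_self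
  rw [← MeasureTheory.ofReal_integral_eq_lintegral_ofReal hint
    (ae_of_all _ fun y => by positivity)]
  apply ENNReal.ofReal_le_ofReal
  rw [← intervalIntegral.integral_of_le hst]
  have hftc : ∫ y in s..t, (y ^ 2)⁻¹ = -t⁻¹ - -s⁻¹ := by
    apply intervalIntegral.integral_eq_sub_of_hasDerivAt
    · intro x hx
      rw [Set.uIcc_of_le hst] at hx
      have hx0 : x ≠ 0 := by
        have : (0:ℝ) < x := lt_of_lt_of_le one_pos (hs.trans hx.1)
        exact this.ne'
      have h := (hasDerivAt_inv hx0).neg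
      simp only [neg_neg] at h
      exact h
    · apply ContinuousOn.intervalIntegrable
      rwa [Set.uIcc_of_le hst]
  rw [hftc]
  linarith

lemma term_bound (a b : ℝ) :
    ∫⁻ y in Set.Ici 1, ENNReal.ofReal (|indi a y - indi b y| * (y ^ 2)⁻¹) ≤
      ENNReal.ofReal ((a ⊓ b ⊔ 1)⁻¹ - (a ⊔ b ⊔ 1)⁻¹) := by
  set m := a ⊓ b
  set M := a ⊔ b
  have hmM : m ≤ M := inf_le_sup
  calc ∫⁻ y in Set.Ici 1, ENNReal.ofReal (|indi a y - indi b y| * (y ^ 2)⁻¹)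
      ≤ ∫⁻ y in Set.Ici 1,
          Set.indicator (Set.Ico (m ⊔ 1) (M ⊔ 1)) (fun y => ENNReal.ofReal ((y ^ 2)⁻¹)) y := by
        apply lintegral_mono_ae
        rw [ae_restrict_iff' measurableSet_Ici]
        refine ae_of_all _ fun y hy => ?_
        rw [abs_indi_sub]
        split_ifs with hmem
        · rw [one_mul, Set.indicator_of_mem]
          exact ⟨sup_le hmem.1 hy, lt_of_lt_of_le hmem.2 le_sup_left⟩
        · simp
    _ ≤ ∫⁻ y, Set.indicator (Set.Ico (m ⊔ 1) (M ⊔ 1)) (fun y => ENNReal.ofReal ((y ^ 2)⁻¹)) y :=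
        lintegral_mono' Measure.restrict_le_self le_rfl
    _ = ∫⁻ y in Set.Ico (m ⊔ 1) (M ⊔ 1), ENNReal.ofReal ((y ^ 2)⁻¹) :=
        lintegral_indicator measurableSet_Ico _
    _ ≤ ENNReal.ofReal ((m ⊔ 1)⁻¹ - (M ⊔ 1)⁻¹) :=
        lintegral_Ico_inv_sq le_sup_right (sup_le_sup_right hmM 1)

lemma sup_one_inv_sub {A B : ℝ} (hA : 0 < A) (hB : 0 < B) :
    (A ⊓ B ⊔ 1)⁻¹ - (A ⊔ B ⊔ 1)⁻¹ ≤ |A⁻¹ - B⁻¹| := by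
  have h1 : (A ⊓ B)⁻¹ = A⁻¹ ⊔ B⁻¹ := by
    rcases le_total A B with h | h
    · rw [inf_eq_left.mpr h, sup_eq_left.mpr (inv_anti₀ hA h)]
    · rw [inf_eq_right.mpr h, sup_eq_right.mpr (inv_anti₀ hB h)]
  have h2 : (A ⊔ B)⁻¹ = A⁻¹ ⊓ B⁻¹ := by
    rcases le_total A B with h | h
    · rw [sup_eq_right.mpr h, inf_eq_right.mpr (inv_anti₀ hA h)]
    · rw [sup_eq_left.mpr h, inf_eq_left.mpr (inv_anti₀ hB h)]
  have hm : 0 < A ⊓ B := lt_inf_iff.2 ⟨hA, hB⟩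
  have hM : 0 < A ⊔ B := lt_of_lt_of_le hm inf_le_sup
  have e1 : (A ⊓ B ⊔ 1)⁻¹ = (A ⊓ B)⁻¹ ⊓ 1 := by
    rcases le_total (A ⊓ B) 1 with h | h
    · rw [sup_eq_right.mpr h, inv_one, inf_eq_right.mpr (one_le_inv₀ hm |>.2 h)]
    · rw [sup_eq_left.mpr h, inf_eq_left.mpr (inv_le_one_of_one_le₀ h)]
  have e2 : (A ⊔ B ⊔ 1)⁻¹ = (A ⊔ B)⁻¹ ⊓ 1 := by
    rcases le_total (A ⊔ B) 1 with h | h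
    · rw [sup_eq_right.mpr h, inv_one, inf_eq_right.mpr (one_le_inv₀ hM |>.2 h)]
    · rw [sup_eq_left.mpr h, inf_eq_left.mpr (inv_le_one_of_one_le₀ h)]
  rw [e1, e2, h1, h2]
  have habs : A⁻¹ ⊔ B⁻¹ - A⁻¹ ⊓ B⁻¹ = |A⁻¹ - B⁻¹| := by
    rw [max_sub_min_eq_abs, abs_sub_comm]
  rw [← habs]
  have hle : A⁻¹ ⊓ B⁻¹ ≤ A⁻¹ ⊔ B⁻¹ := inf_le_sup
  rcases le_total (A⁻¹ ⊔ B⁻¹) 1 with h | h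
  · rw [inf_eq_left.mpr h, inf_eq_left.mpr ((inf_le_sup.trans h))]
  · rcases le_total (A⁻¹ ⊓ B⁻¹) 1 with h' | h'
    · rw [inf_eq_right.mpr h, inf_eq_left.mpr h']
      linarith
    · rw [inf_eq_right.mpr h, inf_eq_right.mpr h']
      linarith

lemma indiA_eq {g : ℝ → ℕ} (hiff : ∀ (n : ℕ) {u : ℝ}, 0 ≤ u → (ginv g n ≤ u ↔ n ≤ g u))
    (y : ℝ) (hy : 0 ≤ y) (k : ℕ) :
    indi (ginv g (k + 1)) y = if k < g y then 1 else 0 := by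
  unfold indi
  exact if_congr (Iff.trans (hiff (k + 1) hy) Nat.succ_le_iff) rfl rfl

lemma summableA {g : ℝ → ℕ} (hiff : ∀ (n : ℕ) {u : ℝ}, 0 ≤ u → (ginv g n ≤ u ↔ n ≤ g u))
    (y : ℝ) : Summable fun k : ℕ => indi (ginv g (k + 1)) y := by
  rcases lt_or_ge y 0 with hy | hy
  · apply summable_of_ne_finset_zero (s := ∅)
    intro k _
    exact if_neg fun h => absurd (lt_of_le_of_lt ((ginv_nonneg g (k+1)).trans h) hy) (lt_irrefl _)
  · apply summable_of_ne_finset_zero (s := Finset.range (g y))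
    intro k hk
    rw [Finset.mem_range] at hk
    rw [indiA_eq hiff y hy k, if_neg hk]

lemma g_eq_tsum {g : ℝ → ℕ} (hiff : ∀ (n : ℕ) {u : ℝ}, 0 ≤ u → (ginv g n ≤ u ↔ n ≤ g u))
    (y : ℝ) (hy : 0 ≤ y) :
    (g y : ℝ) = ∑' k : ℕ, indi (ginv g (k + 1)) y := by
  rw [tsum_congr (indiA_eq hiff y hy), tsum_ite_lt]

lemma indiB_eq {c : ℝ} (hc : 0 < c) (y : ℝ) (hy : 0 ≤ y) (k : ℕ) :
    indi (((k : ℝ) + 1) / c) y = if k < Nat.floor (c * y) then 1 else 0 := by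
  have hcy : 0 ≤ c * y := by positivity
  unfold indi
  refine if_congr ?_ rfl rfl
  have hcast : ((k : ℝ) + 1) = ((k + 1 : ℕ) : ℝ) := by push_cast; ring
  rw [div_le_iff₀ hc, mul_comm y c, hcast, ← Nat.le_floor_iff hcy]
  exact Nat.succ_le_iff

lemma summableB {c : ℝ} (hc : 0 < c) (y : ℝ) :
    Summable fun k : ℕ => indi (((k : ℝ) + 1) / c) y := by
  rcases lt_or_ge y 0 with hy | hy
  · apply summable_of_ne_finset_zero (s := ∅)
    intro k _
    refine if_neg fun h => absurd (lt_of_le_of_lt (le_trans (by positivity) h) hy) (lt_irrefl _)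
  · apply summable_of_ne_finset_zero (s := Finset.range (Nat.floor (c * y)))
    intro k hk
    rw [Finset.mem_range] at hk
    rw [indiB_eq hc y hy k, if_neg hk]

lemma floor_eq_tsum {c : ℝ} (hc : 0 < c) (y : ℝ) (hy : 0 ≤ y) :
    ((Nat.floor (c * y) : ℕ) : ℝ) = ∑' k : ℕ, indi (((k : ℝ) + 1) / c) y := by
  rw [tsum_congr (indiB_eq hc y hy), tsum_ite_lt]

lemma summableD {g : ℝ → ℕ} (hiff : ∀ (n : ℕ) {u : ℝ}, 0 ≤ u → (ginv g n ≤ u ↔ n ≤ g u))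
    {c : ℝ} (hc : 0 < c) (y : ℝ) :
    Summable fun k : ℕ => |indi (ginv g (k + 1)) y - indi (((k : ℝ) + 1) / c) y| :=
  ((summableA hiff y).sub (summableB hc y)).abs

lemma pointwise_bound {g : ℝ → ℕ} (hiff : ∀ (n : ℕ) {u : ℝ}, 0 ≤ u → (ginv g n ≤ u ↔ n ≤ g u))
    {c : ℝ} (hc : 0 < c) (y : ℝ) (hy : 1 ≤ y) :
    |(g y : ℝ) - c * y| ≤
      (∑' k : ℕ, |indi (ginv g (k + 1)) y - indi (((k : ℝ) + 1) / c) y|) + 1 := by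
  have hy0 : (0:ℝ) ≤ y := le_trans zero_le_one hy
  have hcy : 0 ≤ c * y := by positivity
  have h1 : |(g y : ℝ) - (Nat.floor (c * y) : ℝ)| ≤
      ∑' k : ℕ, |indi (ginv g (k + 1)) y - indi (((k : ℝ) + 1) / c) y| := by
    rw [g_eq_tsum hiff y hy0, floor_eq_tsum hc y hy0,
      ← Summable.tsum_sub (summableA hiff y) (summableB hc y)]
    have := norm_tsum_le_tsum_norm (f := fun k : ℕ =>
      indi (ginv g (k + 1)) y - indi (((k : ℝ) + 1) / c) y) ?_
    · simpa [Real.norm_eq_abs] using this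
    · exact (summableD hiff hc y).congr fun k => (Real.norm_eq_abs _).symm
  have h2 : |(Nat.floor (c * y) : ℝ) - c * y| ≤ 1 := by
    have hfl : (Nat.floor (c * y) : ℝ) ≤ c * y := Nat.floor_le hcy
    have hfl2 : c * y < Nat.floor (c * y) + 1 := Nat.lt_floor_add_one _
    rw [abs_le]; constructor <;> linarith
  calc |(g y : ℝ) - c * y| ≤ |(g y : ℝ) - (Nat.floor (c * y) : ℝ)| +
        |(Nat.floor (c * y) : ℝ) - c * y| := abs_sub_le _ _ _
    _ ≤ _ := add_le_add h1 h2

noncomputable def Ebnd (g : ℝ → ℕ) (c : ℝ) (k : ℕ) : ℝ :=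
  16 * c ^ 2 / ((k : ℝ) + 1) ^ 2 + |c / ((k : ℝ) + 1) - tailP g (k + 1)|

lemma Ebnd_nonneg (g : ℝ → ℕ) (c : ℝ) (k : ℕ) : 0 ≤ Ebnd g c k := by
  unfold Ebnd; positivity

lemma Ebnd_summable (g : ℝ → ℕ) (c : ℝ)
    (hsum : Summable fun n : ℕ => |c / (n + 1) - tailP g (n + 1)|) :
    Summable (Ebnd g c) := by
  apply Summable.add
  · have h0 : Summable (fun n : ℕ => 1 / (n : ℝ) ^ 2) :=
      Real.summable_one_div_nat_pow.2 one_lt_two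
    have h1 : Summable (fun k : ℕ => 1 / ((k : ℝ) + 1) ^ 2) := by
      apply ((summable_nat_add_iff 1).2 h0).congr
      intro k; push_cast; ring
    apply (h1.mul_left (16 * c ^ 2)).congr
    intro k; rw [mul_one_div]
  · exact hsum

lemma tail_to_zero {g : ℝ → ℕ} {c : ℝ}
    (htail : Tendsto (fun n : ℕ => (n : ℝ) * tailP g n) atTop (nhds c)) :
    Tendsto (fun k : ℕ => tailP g (k + 1)) atTop (nhds 0) := by
  have h1 : Tendsto (fun k : ℕ => ((k + 1 : ℕ) : ℝ) * tailP g (k + 1)) atTop (nhds c) :=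
    htail.comp (tendsto_add_atTop_nat 1)
  have h2 : Tendsto (fun k : ℕ => 1 / ((k : ℝ) + 1)) atTop (nhds 0) :=
    tendsto_one_div_add_atTop_nhds_zero_nat
  have h3 := h1.mul h2
  rw [mul_zero] at h3
  apply h3.congr
  intro k
  have hk : ((k : ℝ) + 1) ≠ 0 := by positivity
  push_cast
  field_simp

lemma eventually_control {g : ℝ → ℕ} {c : ℝ} (hc : 0 < c)
    (htail : Tendsto (fun n : ℕ => (n : ℝ) * tailP g n) atTop (nhds c)) :
    ∀ᶠ k in atTop, 0 < ginv g (k + 1) ∧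
      |(ginv g (k + 1))⁻¹ - c / ((k : ℝ) + 1)| ≤ Ebnd g c k := by
  have h1 : Tendsto (fun k : ℕ => ((k + 1 : ℕ) : ℝ) * tailP g (k + 1)) atTop (nhds c) :=
    htail.comp (tendsto_add_atTop_nat 1)
  have hev1 : ∀ᶠ k in atTop, tailP g (k + 1) < 1 / 2 :=
    (tail_to_zero htail).eventually_lt_const (by norm_num)
  have hev2 : ∀ᶠ k in atTop, ((k + 1 : ℕ) : ℝ) * tailP g (k + 1) < 2 * c :=
    h1.eventually_lt_const (by linarith)
  filter_upwards [hev1, hev2] with k hk1 hk2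
  set A := ginv g (k + 1) with hA
  have hA0 : 0 ≤ A := ginv_nonneg _ _
  have hAne : A ≠ 0 := by
    intro h0
    rw [tailP, if_pos h0] at hk1
    norm_num at hk1
  have hApos : 0 < A := lt_of_le_of_ne hA0 (Ne.symm hAne)
  refine ⟨hApos, ?_⟩
  set t := tailP g (k + 1) with htdef
  set x := A⁻¹ with hxdef
  have hx : 0 < x := inv_pos.2 hApos
  have hexp : Real.exp (-x) = 1 - t := by
    rw [htdef, tailP, if_neg hAne, ← hA, neg_div, one_div, ← hxdef]
    ring
  have ht0 : 0 ≤ t := by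
    have h := Real.exp_le_exp.2 (neg_nonpos.2 hx.le)
    rw [Real.exp_zero, hexp] at h
    linarith
  have hexpb : Real.exp (-(2 * t)) ≤ 1 - t := by
    have h2t := Real.add_one_le_exp (2 * t)
    have hpos : (0 : ℝ) < 1 + 2 * t := by linarith
    rw [Real.exp_neg]
    have h1' : (Real.exp (2 * t))⁻¹ ≤ (1 + 2 * t)⁻¹ := by
      apply inv_anti₀ hpos; linarith
    apply h1'.trans
    rw [← one_div, div_le_iff₀ hpos]
    nlinarith
  have hxle : x ≤ 2 * t := by
    have hmono : Real.exp (-(2 * t)) ≤ Real.exp (-x) := by rw [hexp]; exact hexpb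
    have h := Real.exp_le_exp.1 hmono
    linarith
  have hk0 : (0 : ℝ) < (k : ℝ) + 1 := by positivity
  have ht2c : t * ((k : ℝ) + 1) < 2 * c := by
    push_cast at hk2; nlinarith
  have hxb : x ≤ 4 * c / ((k : ℝ) + 1) := by
    rw [le_div_iff₀ hk0]; nlinarith
  have habs : |x - t| ≤ x ^ 2 := by
    have hb : |(-x)| ≤ 1 := by
      rw [abs_neg, abs_of_pos hx]; linarith
    have h' := Real.abs_exp_sub_one_sub_id_le hb
    have e : Real.exp (-x) - 1 - (-x) = x - t := by rw [hexp]; ring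
    rw [e, neg_sq] at h'
    exact h'
  have hx2 : x ^ 2 ≤ 16 * c ^ 2 / ((k : ℝ) + 1) ^ 2 := by
    have := pow_le_pow_left₀ hx.le hxb 2
    calc x ^ 2 ≤ (4 * c / ((k : ℝ) + 1)) ^ 2 := this
      _ = 16 * c ^ 2 / ((k : ℝ) + 1) ^ 2 := by rw [div_pow]; ring_nf
  calc |x - c / ((k : ℝ) + 1)| ≤ |x - t| + |t - c / ((k : ℝ) + 1)| := abs_sub_le _ _ _
    _ ≤ 16 * c ^ 2 / ((k : ℝ) + 1) ^ 2 + |c / ((k : ℝ) + 1) - t| := by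
        rw [abs_sub_comm t]
        exact add_le_add (habs.trans hx2) le_rfl
    _ = Ebnd g c k := rfl

/-- Under the hypotheses of part (c), `∫_1^∞ |g(y) − c y| / y² dy < ∞`. -/
theorem integrable_g_sub_linear (g : ℝ → ℕ)
    (hg1 : ∀ x, 0 ≤ x → 1 ≤ g x)
    (hmono : MonotoneOn g (Set.Ici 0))
    (hrc : ∀ x, 0 ≤ x → ContinuousWithinAt g (Set.Ici x) x)
    (hinf : Tendsto g atTop atTop)
    (c : ℝ) (hc : 0 < c)
    (htail : Tendsto (fun n : ℕ => (n : ℝ) * tailP g n) atTop (nhds c))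
    (hliminf : 0 < liminf (fun n : ℕ => ENNReal.ofReal ((n : ℝ) ^ 2 * pmfP g n)) atTop)
    (hlimsup : limsup (fun n : ℕ => ENNReal.ofReal ((n : ℝ) ^ 2 * pmfP g n)) atTop < ⊤)
    (hsum : Summable fun n : ℕ => |c / (n + 1) - tailP g (n + 1)|) :
    IntegrableOn (fun y : ℝ => |(g y : ℝ) - c * y| / y ^ 2) (Set.Ici 1) volume := by

  have hiff : ∀ (n : ℕ) {u : ℝ}, 0 ≤ u → (ginv g n ≤ u ↔ n ≤ g u) :=
    fun n _ hu => ginv_le_iff hmono hrc hinf n hu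
  -- measurability
  have hGmono : Monotone (fun y => ∑' k : ℕ, indi (ginv g (k + 1)) y) := by
    intro y z hyz
    exact Summable.tsum_le_tsum (fun k => indi_mono _ hyz) (summableA hiff y) (summableA hiff z)
  have hmeas2 : Measurable (fun y : ℝ =>
      |(∑' k : ℕ, indi (ginv g (k + 1)) y) - c * y| / y ^ 2) :=
    ((hGmono.measurable.sub (measurable_const.mul measurable_id)).abs.div
      (measurable_id.pow_const 2))
  have haesm : AEStronglyMeasurable (fun y : ℝ => |(g y : ℝ) - c * y| / y ^ 2)
      (volume.restrict (Set.Ici 1)) := by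
    apply hmeas2.aestronglyMeasurable.congr
    refine (ae_restrict_iff' measurableSet_Ici).2 (ae_of_all _ fun y hy => ?_)
    show |(∑' k : ℕ, indi (ginv g (k + 1)) y) - c * y| / y ^ 2 = |(g y : ℝ) - c * y| / y ^ 2
    rw [← g_eq_tsum hiff y (le_trans zero_le_one hy)]
  refine ⟨haesm, ?_⟩
  rw [hasFiniteIntegral_iff_ofReal (ae_of_all _ fun y => by positivity)]
  have hTmeas : ∀ k : ℕ, Measurable (fun y : ℝ =>
      ENNReal.ofReal (|indi (ginv g (k + 1)) y - indi (((k : ℝ) + 1) / c) y| * (y ^ 2)⁻¹)) :=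
    fun k => (((measurable_indi _).sub (measurable_indi _)).abs.mul
      (measurable_id.pow_const 2).inv).ennreal_ofReal
  have key : ∫⁻ y in Set.Ici 1, ENNReal.ofReal (|(g y : ℝ) - c * y| / y ^ 2) ≤
      ∫⁻ y in Set.Ici 1, ((∑' k : ℕ,
        ENNReal.ofReal (|indi (ginv g (k + 1)) y - indi (((k : ℝ) + 1) / c) y| * (y ^ 2)⁻¹))
        + ENNReal.ofReal ((y ^ 2)⁻¹)) := by
    apply lintegral_mono_ae
    refine (ae_restrict_iff' measurableSet_Ici).2 (ae_of_all _ fun y hy => ?_)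
    have hy0 : (0 : ℝ) < y := lt_of_lt_of_le one_pos hy
    have hb := pointwise_bound hiff hc y hy
    calc ENNReal.ofReal (|(g y : ℝ) - c * y| / y ^ 2)
        = ENNReal.ofReal (|(g y : ℝ) - c * y| * (y ^ 2)⁻¹) := by rw [div_eq_mul_inv]
      _ ≤ ENNReal.ofReal
          (((∑' k : ℕ, |indi (ginv g (k + 1)) y - indi (((k : ℝ) + 1) / c) y|) + 1)
            * (y ^ 2)⁻¹) :=
          ENNReal.ofReal_le_ofReal (mul_le_mul_of_nonneg_right hb (by positivity))
      _ = ENNReal.ofReal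
          ((∑' k : ℕ, |indi (ginv g (k + 1)) y - indi (((k : ℝ) + 1) / c) y|) * (y ^ 2)⁻¹
            + (y ^ 2)⁻¹) := by rw [add_mul, one_mul]
      _ ≤ ENNReal.ofReal
          ((∑' k : ℕ, |indi (ginv g (k + 1)) y - indi (((k : ℝ) + 1) / c) y|) * (y ^ 2)⁻¹)
          + ENNReal.ofReal ((y ^ 2)⁻¹) := ENNReal.ofReal_add_le
      _ = (∑' k : ℕ,
          ENNReal.ofReal (|indi (ginv g (k + 1)) y - indi (((k : ℝ) + 1) / c) y| * (y ^ 2)⁻¹))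
          + ENNReal.ofReal ((y ^ 2)⁻¹) := by
          congr 1
          rw [← tsum_mul_right]
          exact ENNReal.ofReal_tsum_of_nonneg (fun k => by positivity)
            ((summableD hiff hc y).mul_right _)
  have key2 : ∫⁻ y in Set.Ici 1, ((∑' k : ℕ,
        ENNReal.ofReal (|indi (ginv g (k + 1)) y - indi (((k : ℝ) + 1) / c) y| * (y ^ 2)⁻¹))
        + ENNReal.ofReal ((y ^ 2)⁻¹)) =
      (∑' k : ℕ, ∫⁻ y in Set.Ici 1,
        ENNReal.ofReal (|indi (ginv g (k + 1)) y - indi (((k : ℝ) + 1) / c) y| * (y ^ 2)⁻¹))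
        + ∫⁻ y in Set.Ici 1, ENNReal.ofReal ((y ^ 2)⁻¹) := by
    have hwmeas : Measurable fun y : ℝ => ENNReal.ofReal ((y ^ 2)⁻¹) :=
      (measurable_id.pow_const 2).inv.ennreal_ofReal
    rw [lintegral_add_right _ hwmeas, lintegral_tsum fun k => (hTmeas k).aemeasurable]
  have hwfin : ∫⁻ y in Set.Ici 1, ENNReal.ofReal ((y ^ 2)⁻¹) < ⊤ := by
    have hint : IntegrableOn (fun y : ℝ => (y ^ 2)⁻¹) (Set.Ici 1) := by
      rw [integrableOn_Ici_iff_integrableOn_Ioi]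
      refine (integrableOn_Ioi_rpow_of_lt (by norm_num : (-2 : ℝ) < -1)
        one_pos).congr_fun ?_ measurableSet_Ioi
      intro y hy
      have hy0 : (0 : ℝ) < y := lt_trans one_pos hy
      show y ^ (-2 : ℝ) = (y ^ 2)⁻¹
      rw [Real.rpow_neg hy0.le, show ((2:ℝ)) = ((2:ℕ):ℝ) by norm_num, Real.rpow_natCast]
    have hfin := hint.2
    rwa [hasFiniteIntegral_iff_ofReal (ae_of_all _ fun y => by positivity)] at hfin
  obtain ⟨N, hN⟩ := eventually_atTop.1 (eventually_control hc htail)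
  have hsumT : (∑' k : ℕ, ∫⁻ y in Set.Ici 1,
      ENNReal.ofReal (|indi (ginv g (k + 1)) y - indi (((k : ℝ) + 1) / c) y| * (y ^ 2)⁻¹))
      < ⊤ := by
    have hb : ∀ k : ℕ, (∫⁻ y in Set.Ici 1,
        ENNReal.ofReal (|indi (ginv g (k + 1)) y - indi (((k : ℝ) + 1) / c) y| * (y ^ 2)⁻¹)) ≤
        (if k < N then 1 else 0) + ENNReal.ofReal (Ebnd g c k) := by
      intro k
      rcases lt_or_ge k N with h | h
      · rw [if_pos h]
        refine le_trans ((term_bound _ _).trans ?_) le_self_add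
        rw [← ENNReal.ofReal_one]
        apply ENNReal.ofReal_le_ofReal
        have h1 : ((ginv g (k + 1) ⊓ (((k : ℝ) + 1) / c)) ⊔ 1)⁻¹ ≤ 1 :=
          inv_le_one_of_one_le₀ le_sup_right
        have h2 : (0:ℝ) ≤ ((ginv g (k + 1) ⊔ (((k : ℝ) + 1) / c)) ⊔ 1)⁻¹ := by positivity
        linarith
      · rw [if_neg (not_lt.2 h), zero_add]
        obtain ⟨hA, hE⟩ := hN k h
        refine (term_bound _ _).trans (ENNReal.ofReal_le_ofReal ?_)
        have hB : 0 < ((k : ℝ) + 1) / c := by positivity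
        refine (sup_one_inv_sub hA hB).trans ?_
        rw [inv_div]
        exact hE
    calc (∑' k : ℕ, ∫⁻ y in Set.Ici 1,
          ENNReal.ofReal (|indi (ginv g (k + 1)) y - indi (((k : ℝ) + 1) / c) y| * (y ^ 2)⁻¹))
        ≤ ∑' k : ℕ, ((if k < N then 1 else 0) + ENNReal.ofReal (Ebnd g c k)) :=
          ENNReal.tsum_le_tsum hb
      _ = (∑' k : ℕ, (if k < N then (1 : ℝ≥0∞) else 0))
          + ∑' k : ℕ, ENNReal.ofReal (Ebnd g c k) := ENNReal.tsum_add
      _ < ⊤ := by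
          apply ENNReal.add_lt_top.2
          constructor
          · rw [tsum_eq_sum (s := Finset.range N)
              (by intro k hk; rw [Finset.mem_range] at hk; exact if_neg hk)]
            have hle : ∑ k ∈ Finset.range N, (if k < N then (1:ℝ≥0∞) else 0) ≤ (N : ℝ≥0∞) := by
              calc ∑ k ∈ Finset.range N, (if k < N then (1:ℝ≥0∞) else 0)
                  ≤ ∑ _k ∈ Finset.range N, (1:ℝ≥0∞) :=
                    Finset.sum_le_sum fun k _ => by split_ifs <;> simp
                _ = N := by simp
            exact lt_of_le_of_lt hle (ENNReal.natCast_lt_top N)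
          · rw [← ENNReal.ofReal_tsum_of_nonneg (Ebnd_nonneg g c) (Ebnd_summable g c hsum)]
            exact ENNReal.ofReal_lt_top
  exact lt_of_le_of_lt (key.trans_eq key2) (ENNReal.add_lt_top.2 ⟨hsumT, hwfin⟩)
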